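/- Let M = {m_1, m_2, m_3} be a move set of three basic moves m_i = (c_i, d_i), and let w_1, w_2, w_3 be nonzero integers with gcd(w_1, w_2, w_3) = 1 and w_1·m_1 + w_2·m_2 + w_3·m_3 = (0,0). Set Δ* = max(|w_1 c_1|, |w_1 d_1|, |w_2 c_2|, |w_2 d_2|, |w_3 c_3|, |w_3 d_3|). Then: (i) every vertex z = (z_1, z_2, z_3) of the inside-out polytope (([0,1]²)³, A_M³) whose components are pairwise distinct and satisfy z_2 − z_1 ∈ ℝ·m_1, z_3 − z_1 ∈ ℝ·m_2, z_3 − z_2 ∈ ℝ·m_3 (a triangular configuration of three pairwise attacking pieces) has denominator Δ(z) = Δ*; (ii) such a vertex exists. -/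

import Mathlib

/-- A basic move: a nonzero integer vector with coprime coordinates. -/
def IsBasicMove (m : ℤ × ℤ) : Prop := m ≠ 0 ∧ Int.gcd m.1 m.2 = 1

/-- Two integer vectors are parallel if one is a rational scalar multiple of the other. -/
def IntPara (a b : ℤ × ℤ) : Prop :=
  (∃ r : ℚ, (b.1 : ℚ) = r * a.1 ∧ (b.2 : ℚ) = r * a.2) ∨
  (∃ r : ℚ, (a.1 : ℚ) = r * b.1 ∧ (a.2 : ℚ) = r * b.2)

/-- A move set: a finite set of basic moves, no two of which are parallel. -/
def IsMoveSet (M : Finset (ℤ × ℤ)) : Prop :=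
  (∀ m ∈ M, IsBasicMove m) ∧ ∀ m ∈ M, ∀ m' ∈ M, m ≠ m' → ¬ IntPara m m'

/-- The polytope ([0,1]²)^q of configurations of q pieces on the square board. -/
def cube (q : ℕ) : Set (Fin q → ℝ × ℝ) :=
  {z | ∀ i, (z i).1 ∈ Set.Icc (0:ℝ) 1 ∧ (z i).2 ∈ Set.Icc (0:ℝ) 1}

/-- The move arrangement: hyperplanes (z_j - z_i)·(d,-c) = 0 for moves m = (c,d) ∈ M. -/
def moveHyps (M : Finset (ℤ × ℤ)) (q : ℕ) : Set (Set (Fin q → ℝ × ℝ)) :=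
  {H | ∃ m ∈ M, ∃ i j : Fin q, i < j ∧
    H = {z | ((z j).1 - (z i).1) * (m.2 : ℝ) - ((z j).2 - (z i).2) * (m.1 : ℝ) = 0}}

/-- The facet hyperplanes of the hypercube ([0,1]²)^q. -/
def facetHyps (q : ℕ) : Set (Set (Fin q → ℝ × ℝ)) :=
  {H | ∃ i : Fin q,
    H = {z | (z i).1 = 0} ∨ H = {z | (z i).1 = 1} ∨
    H = {z | (z i).2 = 0} ∨ H = {z | (z i).2 = 1}}

/-- A vertex of the inside-out polytope (([0,1]²)^q, A_M^q): a point of the cube such that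
the intersection of all move hyperplanes and facet hyperplanes containing it is exactly it. -/
def IsVertex (M : Finset (ℤ × ℤ)) (q : ℕ) (z : Fin q → ℝ × ℝ) : Prop :=
  z ∈ cube q ∧
  ⋂₀ {H | H ∈ moveHyps M q ∪ facetHyps q ∧ z ∈ H} = {z}

/-- `N` is a positive integer making `N • z` integral. -/
def IsIntegralizer (N : ℕ) {q : ℕ} (z : Fin q → ℝ × ℝ) : Prop :=
  0 < N ∧ ∀ i, (∃ a : ℤ, (N : ℝ) * (z i).1 = (a : ℝ)) ∧ (∃ b : ℤ, (N : ℝ) * (z i).2 = (b : ℝ))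

/-- The denominator Δ(z): the least positive integer N with N • z integral. -/
noncomputable def denom {q : ℕ} (z : Fin q → ℝ × ℝ) : ℕ := sInf {N | IsIntegralizer N z}

/-- The number of nonattacking configurations of q riders with move set M on the n×n board. -/
noncomputable def uCount (M : Finset (ℤ × ℤ)) (q n : ℕ) : ℕ :=
  Nat.card {S : Finset (ℤ × ℤ) //
    (∀ p ∈ S, p ∈ Finset.Icc (1 : ℤ) n ×ˢ Finset.Icc (1 : ℤ) n) ∧ S.card = q ∧
    ∀ a ∈ S, ∀ b ∈ S, a ≠ b → ∀ m ∈ M, ¬ ∃ t : ℤ, b - a = t • m}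


lemma perp_smul {c d u v : ℝ} (hm : ¬(c = 0 ∧ d = 0)) (h : u * d - v * c = 0) :
    ∃ t : ℝ, u = t * c ∧ v = t * d := by
  rcases eq_or_ne c 0 with hc | hc
  · have hd : d ≠ 0 := fun hd => hm ⟨hc, hd⟩
    refine ⟨v / d, ?_, by field_simp⟩
    have h2 : u * d = 0 := by rw [hc] at h; linarith
    rcases mul_eq_zero.1 h2 with h1 | h1
    · simp [h1, hc]
    · exact absurd h1 hd
  · refine ⟨u / c, by field_simp, ?_⟩
    field_simp
    linarith [h]

lemma det_ne {m m' : ℤ × ℤ} (h0 : m ≠ 0) (h : ¬ IntPara m m') :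
    m.1 * m'.2 - m.2 * m'.1 ≠ 0 := by
  intro hdet
  apply h
  left
  rcases eq_or_ne m.1 0 with hc | hc
  · have hd : m.2 ≠ 0 := by
      intro hd; exact h0 (Prod.ext hc hd)
    have h1 : m'.1 * m.2 = 0 := by rw [hc] at hdet; linarith
    have h1 : m'.1 = 0 := by
      rcases mul_eq_zero.1 h1 with h1 | h1
      · exact h1
      · exact absurd h1 hd
    exact ⟨(m'.2 : ℚ) / (m.2 : ℚ), by rw [hc, h1]; push_cast; ring, by
      have : (m.2 : ℚ) ≠ 0 := Int.cast_ne_zero.2 hd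
      field_simp⟩
  · refine ⟨(m'.1 : ℚ) / (m.1 : ℚ), by
      have : (m.1 : ℚ) ≠ 0 := Int.cast_ne_zero.2 hc
      field_simp, ?_⟩
    have h1 : (m.1 : ℚ) ≠ 0 := Int.cast_ne_zero.2 hc
    have h2 : (m.1 : ℚ) * m'.2 - m.2 * m'.1 = 0 := by exact_mod_cast congrArg (Int.cast : ℤ → ℚ) hdet
    field_simp
    linarith

lemma solve2 {c1 d1 c2 d2 α β : ℝ} (hdet : c1 * d2 - d1 * c2 ≠ 0)
    (h1 : α * c1 + β * c2 = 0) (h2 : α * d1 + β * d2 = 0) : α = 0 ∧ β = 0 := by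
  constructor
  · by_contra hα
    apply hdet
    have e1 : α * (c1 * d2 - d1 * c2) = 0 := by linear_combination d2 * h1 - c2 * h2
    rcases mul_eq_zero.1 e1 with h | h
    · exact absurd h hα
    · exact h
  · by_contra hβ
    apply hdet
    have e1 : β * (c1 * d2 - d1 * c2) = 0 := by linear_combination c1 * h2 - d1 * h1
    rcases mul_eq_zero.1 e1 with h | h
    · exact absurd h hβ
    · exact h

lemma min3 (f : Fin 3 → ℤ) : ∃ p, ∀ q, f p ≤ f q := by
  rcases le_total (f 0) (f 1) with h01 | h01
  · rcases le_total (f 0) (f 2) with h02 | h02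
    · exact ⟨0, fun q => by fin_cases q <;> simpa⟩
    · exact ⟨2, fun q => by fin_cases q <;> simp <;> omega⟩
  · rcases le_total (f 1) (f 2) with h12 | h12
    · exact ⟨1, fun q => by fin_cases q <;> simp <;> omega⟩
    · exact ⟨2, fun q => by fin_cases q <;> simp <;> omega⟩

lemma bound3 {x2 x3 C : ℤ} (h2a : -C ≤ x2) (h2b : x2 ≤ C) (h3a : -C ≤ x3) (h3b : x3 ≤ C)
    (h23a : -C ≤ x2 - x3) (h23b : x2 - x3 ≤ C) (i j : Fin 3) :
    -C ≤ ![0, x2, x3] i - ![0, x2, x3] j ∧ ![0, x2, x3] i - ![0, x2, x3] j ≤ C := by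
  fin_cases i <;> fin_cases j <;> constructor <;> simp <;> omega

lemma castmax6 (a b c d e f : ℤ) :
    ((max (max (max a.natAbs b.natAbs) (max c.natAbs d.natAbs)) (max e.natAbs f.natAbs) : ℕ) : ℝ)
      = max (max (max |(a:ℝ)| |(b:ℝ)|) (max |(c:ℝ)| |(d:ℝ)|)) (max |(e:ℝ)| |(f:ℝ)|) := by
  push_cast [Nat.cast_natAbs]
  rfl

lemma natAbs_pair {a : ℤ} {n : ℕ} (h : a.natAbs ≤ n) : -(n:ℤ) ≤ a ∧ a ≤ (n:ℤ) := by omega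

lemma sixbounds {A1 B1 A2 B2 A3 B3 : ℤ} {Δ : ℕ}
    (hΔ : Δ = max (max (max A1.natAbs B1.natAbs) (max A2.natAbs B2.natAbs))
      (max A3.natAbs B3.natAbs)) :
    (-(Δ:ℤ) ≤ A1 ∧ A1 ≤ (Δ:ℤ)) ∧ (-(Δ:ℤ) ≤ B1 ∧ B1 ≤ (Δ:ℤ)) ∧
    (-(Δ:ℤ) ≤ A2 ∧ A2 ≤ (Δ:ℤ)) ∧ (-(Δ:ℤ) ≤ B2 ∧ B2 ≤ (Δ:ℤ)) ∧
    (-(Δ:ℤ) ≤ A3 ∧ A3 ≤ (Δ:ℤ)) ∧ (-(Δ:ℤ) ≤ B3 ∧ B3 ≤ (Δ:ℤ)) := by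
  subst hΔ
  refine ⟨natAbs_pair ?_, natAbs_pair ?_, natAbs_pair ?_, natAbs_pair ?_,
    natAbs_pair ?_, natAbs_pair ?_⟩
  · exact ((le_max_left _ _).trans (le_max_left _ _)).trans (le_max_left _ _)
  · exact ((le_max_right _ _).trans (le_max_left _ _)).trans (le_max_left _ _)
  · exact ((le_max_left _ _).trans (le_max_right _ _)).trans (le_max_left _ _)
  · exact ((le_max_right _ _).trans (le_max_right _ _)).trans (le_max_left _ _)
  · exact (le_max_left _ _).trans (le_max_right _ _)
  · exact (le_max_right _ _).trans (le_max_right _ _)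

lemma maxcases {A1 B1 A2 B2 A3 B3 : ℤ} {Δ : ℕ}
    (hΔ : Δ = max (max (max A1.natAbs B1.natAbs) (max A2.natAbs B2.natAbs))
      (max A3.natAbs B3.natAbs)) :
    Δ = A1.natAbs ∨ Δ = B1.natAbs ∨ Δ = A2.natAbs ∨ Δ = B2.natAbs ∨
    Δ = A3.natAbs ∨ Δ = B3.natAbs := by
  rcases max_choice (max (max A1.natAbs B1.natAbs) (max A2.natAbs B2.natAbs))
    (max A3.natAbs B3.natAbs) with h1 | h1 <;> rw [h1] at hΔ
  · rcases max_choice (max A1.natAbs B1.natAbs) (max A2.natAbs B2.natAbs) with h2 | h2 <;>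
      rw [h2] at hΔ
    · rcases max_choice A1.natAbs B1.natAbs with h3 | h3 <;> rw [h3] at hΔ
      · exact Or.inl hΔ
      · exact Or.inr (Or.inl hΔ)
    · rcases max_choice A2.natAbs B2.natAbs with h3 | h3 <;> rw [h3] at hΔ
      · exact Or.inr (Or.inr (Or.inl hΔ))
      · exact Or.inr (Or.inr (Or.inr (Or.inl hΔ)))
  · rcases max_choice A3.natAbs B3.natAbs with h3 | h3 <;> rw [h3] at hΔ
    · exact Or.inr (Or.inr (Or.inr (Or.inr (Or.inl hΔ))))
    · exact Or.inr (Or.inr (Or.inr (Or.inr (Or.inr hΔ))))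

lemma pos6 {A1 B1 A2 B2 A3 B3 : ℤ} {Δ : ℕ}
    (hΔ : Δ = max (max (max A1.natAbs B1.natAbs) (max A2.natAbs B2.natAbs))
      (max A3.natAbs B3.natAbs)) (h : ¬(A1 = 0 ∧ B1 = 0)) : 0 < Δ := by
  have h1 : A1.natAbs ≤ Δ := hΔ ▸ ((le_max_left _ _).trans (le_max_left _ _)).trans (le_max_left _ _)
  have h2 : B1.natAbs ≤ Δ := hΔ ▸ ((le_max_right _ _).trans (le_max_left _ _)).trans (le_max_left _ _)
  clear hΔ
  rcases Nat.eq_zero_or_pos Δ with h0 | h0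
  · exfalso; apply h; constructor <;> omega
  · exact h0

set_option maxHeartbeats 3200000 in
theorem stmt12 (m1 m2 m3 : ℤ × ℤ) (hne12 : m1 ≠ m2) (hne13 : m1 ≠ m3) (hne23 : m2 ≠ m3)
    (hM : IsMoveSet {m1, m2, m3})
    (w1 w2 w3 : ℤ) (hw1 : w1 ≠ 0) (hw2 : w2 ≠ 0) (hw3 : w3 ≠ 0)
    (hgcd : Int.gcd w1 (Int.gcd w2 w3) = 1)
    (hsum : w1 • m1 + w2 • m2 + w3 • m3 = 0) :
    (∀ z : Fin 3 → ℝ × ℝ, IsVertex {m1, m2, m3} 3 z →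
      z 0 ≠ z 1 → z 0 ≠ z 2 → z 1 ≠ z 2 →
      (∃ t : ℝ, z 1 - z 0 = t • ((m1.1 : ℝ), (m1.2 : ℝ))) →
      (∃ t : ℝ, z 2 - z 0 = t • ((m2.1 : ℝ), (m2.2 : ℝ))) →
      (∃ t : ℝ, z 2 - z 1 = t • ((m3.1 : ℝ), (m3.2 : ℝ))) →
      denom z = max (max (max (w1 * m1.1).natAbs (w1 * m1.2).natAbs)
          (max (w2 * m2.1).natAbs (w2 * m2.2).natAbs))
        (max (w3 * m3.1).natAbs (w3 * m3.2).natAbs)) ∧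
    (∃ z : Fin 3 → ℝ × ℝ, IsVertex {m1, m2, m3} 3 z ∧
      z 0 ≠ z 1 ∧ z 0 ≠ z 2 ∧ z 1 ≠ z 2 ∧
      (∃ t : ℝ, z 1 - z 0 = t • ((m1.1 : ℝ), (m1.2 : ℝ))) ∧
      (∃ t : ℝ, z 2 - z 0 = t • ((m2.1 : ℝ), (m2.2 : ℝ))) ∧
      (∃ t : ℝ, z 2 - z 1 = t • ((m3.1 : ℝ), (m3.2 : ℝ)))) := by
  classical
  have hmem1 : m1 ∈ ({m1, m2, m3} : Finset (ℤ × ℤ)) := by simp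
  have hmem2 : m2 ∈ ({m1, m2, m3} : Finset (ℤ × ℤ)) := by simp
  have hmem3 : m3 ∈ ({m1, m2, m3} : Finset (ℤ × ℤ)) := by simp
  have hb1 := hM.1 m1 hmem1
  have hb2 := hM.1 m2 hmem2
  have hb3 := hM.1 m3 hmem3
  have hp12 := hM.2 m1 hmem1 m2 hmem2 hne12
  have d12 : m1.1 * m2.2 - m1.2 * m2.1 ≠ 0 := det_ne hb1.1 hp12
  have d12R : (m1.1 : ℝ) * m2.2 - (m1.2 : ℝ) * m2.1 ≠ 0 := by
    intro h; exact d12 (by exact_mod_cast h)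
  have hs1 : w1 * m1.1 + w2 * m2.1 + w3 * m3.1 = 0 := by
    have := congrArg Prod.fst hsum
    simpa [Prod.smul_def, smul_eq_mul] using this
  have hs2 : w1 * m1.2 + w2 * m2.2 + w3 * m3.2 = 0 := by
    have := congrArg Prod.snd hsum
    simpa [Prod.smul_def, smul_eq_mul] using this
  set A1 : ℤ := w1 * m1.1 with hA1
  set B1 : ℤ := w1 * m1.2 with hB1
  set A2 : ℤ := w2 * m2.1 with hA2
  set B2 : ℤ := w2 * m2.2 with hB2
  set A3 : ℤ := w3 * m3.1 with hA3
  set B3 : ℤ := w3 * m3.2 with hB3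
  set Δ : ℕ := max (max (max A1.natAbs B1.natAbs) (max A2.natAbs B2.natAbs))
      (max A3.natAbs B3.natAbs) with hΔ
  have hA123 : A1 + A2 + A3 = 0 := hs1
  have hB123 : B1 + B2 + B3 = 0 := hs2
  have hm1 : ¬(A1 = 0 ∧ B1 = 0) := by
    rintro ⟨h1, h2⟩
    rw [hA1] at h1; rw [hB1] at h2
    refine hb1.1 (Prod.ext ?_ ?_)
    · rcases mul_eq_zero.1 h1 with h | h
      · exact absurd h hw1
      · exact h
    · rcases mul_eq_zero.1 h2 with h | h
      · exact absurd h hw1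
      · exact h
  have hm2 : ¬(A2 = 0 ∧ B2 = 0) := by
    rintro ⟨h1, h2⟩
    rw [hA2] at h1; rw [hB2] at h2
    refine hb2.1 (Prod.ext ?_ ?_)
    · rcases mul_eq_zero.1 h1 with h | h
      · exact absurd h hw2
      · exact h
    · rcases mul_eq_zero.1 h2 with h | h
      · exact absurd h hw2
      · exact h
  have hm3 : ¬(A3 = 0 ∧ B3 = 0) := by
    rintro ⟨h1, h2⟩
    rw [hA3] at h1; rw [hB3] at h2
    refine hb3.1 (Prod.ext ?_ ?_)
    · rcases mul_eq_zero.1 h1 with h | h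
      · exact absurd h hw3
      · exact h
    · rcases mul_eq_zero.1 h2 with h | h
      · exact absurd h hw3
      · exact h
  have hΔpos : 0 < Δ := pos6 hΔ hm1
  obtain ⟨⟨hA1l, hA1r⟩, ⟨hB1l, hB1r⟩, ⟨hA2l, hA2r⟩, ⟨hB2l, hB2r⟩, ⟨hA3l, hA3r⟩,
    ⟨hB3l, hB3r⟩⟩ := sixbounds hΔ
  have hcases := maxcases hΔ
  have hΔR : (Δ : ℝ) = max (max (max |((A1 : ℤ) : ℝ)| |((B1 : ℤ) : ℝ)|)
      (max |((A2 : ℤ) : ℝ)| |((B2 : ℤ) : ℝ)|)) (max |((A3 : ℤ) : ℝ)| |((B3 : ℤ) : ℝ)|) := by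
    rw [hΔ]
    exact castmax6 A1 B1 A2 B2 A3 B3
  clear hΔ
  have hδpos : (0 : ℝ) < (Δ : ℝ) := by exact_mod_cast hΔpos
  have hδne : (Δ : ℝ) ≠ 0 := ne_of_gt hδpos
  set aZ : Fin 3 → ℤ := ![0, A1, -A2] with haZ
  set bZ : Fin 3 → ℤ := ![0, B1, -B2] with hbZ
  have hs1R : (w1 : ℝ) * m1.1 + w2 * m2.1 + w3 * m3.1 = 0 := by exact_mod_cast hs1
  have hs2R : (w1 : ℝ) * m1.2 + w2 * m2.2 + w3 * m3.2 = 0 := by exact_mod_cast hs2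
  have hw3R : (w3 : ℝ) ≠ 0 := Int.cast_ne_zero.2 hw3
  -- parametrization of triangular configurations
  have tri_param : ∀ z : Fin 3 → ℝ × ℝ,
      (∃ t : ℝ, z 1 - z 0 = t • ((m1.1 : ℝ), (m1.2 : ℝ))) →
      (∃ t : ℝ, z 2 - z 0 = t • ((m2.1 : ℝ), (m2.2 : ℝ))) →
      (∃ t : ℝ, z 2 - z 1 = t • ((m3.1 : ℝ), (m3.2 : ℝ))) →
      ∃ s : ℝ, ∀ p : Fin 3,
        (z p).1 = (z 0).1 + s * ((aZ p : ℤ) : ℝ) ∧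
        (z p).2 = (z 0).2 + s * ((bZ p : ℤ) : ℝ) := by
    rintro z ⟨t1, h1⟩ ⟨t2, h2⟩ ⟨t3, h3⟩
    have h1x : (z 1).1 - (z 0).1 = t1 * m1.1 := by
      have := congrArg Prod.fst h1; simpa using this
    have h1y : (z 1).2 - (z 0).2 = t1 * m1.2 := by
      have := congrArg Prod.snd h1; simpa using this
    have h2x : (z 2).1 - (z 0).1 = t2 * m2.1 := by
      have := congrArg Prod.fst h2; simpa using this
    have h2y : (z 2).2 - (z 0).2 = t2 * m2.2 := by
      have := congrArg Prod.snd h2; simpa using this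
    have h3x : (z 2).1 - (z 1).1 = t3 * m3.1 := by
      have := congrArg Prod.fst h3; simpa using this
    have h3y : (z 2).2 - (z 1).2 = t3 * m3.2 := by
      have := congrArg Prod.snd h3; simpa using this
    have ex : t2 * m2.1 - t1 * m1.1 = t3 * m3.1 := by linarith
    have ey : t2 * m2.2 - t1 * m1.2 = t3 * m3.2 := by linarith
    have hex : (t3 * w1 - w3 * t1) * (m1.1 : ℝ) + (w3 * t2 + t3 * w2) * (m2.1 : ℝ) = 0 := by
      linear_combination (w3 : ℝ) * ex + t3 * hs1R
    have hey : (t3 * w1 - w3 * t1) * (m1.2 : ℝ) + (w3 * t2 + t3 * w2) * (m2.2 : ℝ) = 0 := by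
      linear_combination (w3 : ℝ) * ey + t3 * hs2R
    obtain ⟨hα, hβ⟩ := solve2 d12R hex hey
    refine ⟨t3 / w3, fun p => ?_⟩
    have ht1 : t1 = t3 / w3 * w1 := by field_simp; linarith
    have ht2 : t2 = -(t3 / w3 * w2) := by field_simp; linarith
    fin_cases p
    · simp [haZ, hbZ]
    · constructor
      · show (z 1).1 = (z 0).1 + t3 / w3 * ((aZ 1 : ℤ) : ℝ)
        have ha : ((aZ 1 : ℤ) : ℝ) = (w1 : ℝ) * m1.1 := by
          rw [show aZ 1 = A1 from by simp [haZ], hA1]; push_cast; ring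
        rw [ha]
        rw [ht1] at h1x
        linear_combination h1x
      · show (z 1).2 = (z 0).2 + t3 / w3 * ((bZ 1 : ℤ) : ℝ)
        have ha : ((bZ 1 : ℤ) : ℝ) = (w1 : ℝ) * m1.2 := by
          rw [show bZ 1 = B1 from by simp [hbZ], hB1]; push_cast; ring
        rw [ha]
        rw [ht1] at h1y
        linear_combination h1y
    · constructor
      · show (z 2).1 = (z 0).1 + t3 / w3 * ((aZ 2 : ℤ) : ℝ)
        have ha : ((aZ 2 : ℤ) : ℝ) = -((w2 : ℝ) * m2.1) := by
          rw [show aZ 2 = -A2 from by simp [haZ], hA2]; push_cast; ring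
        rw [ha]
        rw [ht2] at h2x
        linear_combination h2x
      · show (z 2).2 = (z 0).2 + t3 / w3 * ((bZ 2 : ℤ) : ℝ)
        have ha : ((bZ 2 : ℤ) : ℝ) = -((w2 : ℝ) * m2.2) := by
          rw [show bZ 2 = -B2 from by simp [hbZ], hB2]; push_cast; ring
        rw [ha]
        rw [ht2] at h2y
        linear_combination h2y
  constructor
  · -- Part (i): every triangular vertex has denominator Δ
    intro z hv hd01 hd02 hd12' ht1 ht2 ht3
    obtain ⟨s, hzp⟩ := tri_param z ht1 ht2 ht3
    have hx : ∀ p : Fin 3, (z p).1 = (z 0).1 + s * ((aZ p : ℤ) : ℝ) := fun p => (hzp p).1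
    have hy : ∀ p : Fin 3, (z p).2 = (z 0).2 + s * ((bZ p : ℤ) : ℝ) := fun p => (hzp p).2
    have hs0 : s ≠ 0 := by
      intro h
      apply hd01
      have e1 : (z 1).1 = (z 0).1 := by rw [hx 1, h]; ring
      have e2 : (z 1).2 = (z 0).2 := by rw [hy 1, h]; ring
      exact (Prod.ext e1.symm e2.symm)
    have hcx : ∀ p : Fin 3, 0 ≤ (z p).1 ∧ (z p).1 ≤ 1 := fun p => Set.mem_Icc.1 (hv.1 p).1
    have hcy : ∀ p : Fin 3, 0 ≤ (z p).2 ∧ (z p).2 ≤ 1 := fun p => Set.mem_Icc.1 (hv.1 p).2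
    have hvert := hv.2
    -- perturbation argument
    have pert : ∀ u v σ : ℝ,
        (∀ p : Fin 3, ((z p).1 = 0 ∨ (z p).1 = 1) → u + σ * ((aZ p : ℤ) : ℝ) = 0) →
        (∀ p : Fin 3, ((z p).2 = 0 ∨ (z p).2 = 1) → v + σ * ((bZ p : ℤ) : ℝ) = 0) →
        ∀ p : Fin 3, u + σ * ((aZ p : ℤ) : ℝ) = 0 ∧ v + σ * ((bZ p : ℤ) : ℝ) = 0 := by
      intro u v σ hxc hyc
      have hz'mem : (fun p : Fin 3 =>
          ((z p).1 + (u + σ * ((aZ p : ℤ) : ℝ)), (z p).2 + (v + σ * ((bZ p : ℤ) : ℝ))))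
          ∈ ⋂₀ {H | H ∈ moveHyps {m1, m2, m3} 3 ∪ facetHyps 3 ∧ z ∈ H} := by
        refine Set.mem_sInter.2 ?_
        rintro H ⟨hU, hzH⟩
        rcases hU with hmv | hft
        · obtain ⟨m, hmM, i, j, hij, rfl⟩ := hmv
          simp only [Set.mem_setOf_eq] at hzH ⊢
          have e1 : s * (((aZ j : ℤ) : ℝ) - ((aZ i : ℤ) : ℝ)) = (z j).1 - (z i).1 := by
            rw [hx j, hx i]; ring
          have e2 : s * (((bZ j : ℤ) : ℝ) - ((bZ i : ℤ) : ℝ)) = (z j).2 - (z i).2 := by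
            rw [hy j, hy i]; ring
          have key : s * ((((aZ j : ℤ) : ℝ) - ((aZ i : ℤ) : ℝ)) * (m.2 : ℝ)
              - (((bZ j : ℤ) : ℝ) - ((bZ i : ℤ) : ℝ)) * (m.1 : ℝ)) = 0 := by
            linear_combination (m.2 : ℝ) * e1 - (m.1 : ℝ) * e2 + hzH
          have key2 : (((aZ j : ℤ) : ℝ) - ((aZ i : ℤ) : ℝ)) * (m.2 : ℝ)
              - (((bZ j : ℤ) : ℝ) - ((bZ i : ℤ) : ℝ)) * (m.1 : ℝ) = 0 := by
            rcases mul_eq_zero.1 key with h | h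
            · exact absurd h hs0
            · exact h
          linear_combination hzH + σ * key2
        · obtain ⟨i, hH⟩ := hft
          rcases hH with rfl | rfl | rfl | rfl
          · simp only [Set.mem_setOf_eq] at hzH ⊢
            rw [hxc i (Or.inl hzH), hzH]; ring
          · simp only [Set.mem_setOf_eq] at hzH ⊢
            rw [hxc i (Or.inr hzH), hzH]; ring
          · simp only [Set.mem_setOf_eq] at hzH ⊢
            rw [hyc i (Or.inl hzH), hzH]; ring
          · simp only [Set.mem_setOf_eq] at hzH ⊢
            rw [hyc i (Or.inr hzH), hzH]; ring
      rw [hvert] at hz'mem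
      have hz'eq := Set.mem_singleton_iff.1 hz'mem
      intro p
      have e1 := congrArg Prod.fst (congrFun hz'eq p)
      have e2 := congrArg Prod.snd (congrFun hz'eq p)
      simp only [] at e1 e2
      constructor <;> linarith
    have exX : ∃ p : Fin 3, (z p).1 = 0 ∨ (z p).1 = 1 := by
      by_contra hno
      have := (pert 1 0 0 (fun p hp => absurd ⟨p, hp⟩ hno) (fun p _ => by norm_num) 0).1
      norm_num at this
    have exY : ∃ p : Fin 3, (z p).2 = 0 ∨ (z p).2 = 1 := by
      by_contra hno
      have := (pert 0 1 0 (fun p _ => by norm_num) (fun p hp => absurd ⟨p, hp⟩ hno) 0).2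
      norm_num at this
    have hctr :
        (∃ p q : Fin 3, ((z p).1 = 0 ∨ (z p).1 = 1) ∧ ((z q).1 = 0 ∨ (z q).1 = 1) ∧ aZ p ≠ aZ q) ∨
        (∃ p q : Fin 3, ((z p).2 = 0 ∨ (z p).2 = 1) ∧ ((z q).2 = 0 ∨ (z q).2 = 1) ∧ bZ p ≠ bZ q) := by
      by_contra hno
      push_neg at hno
      obtain ⟨hnx, hny⟩ := hno
      obtain ⟨p0, hp0⟩ := exX
      obtain ⟨q0, hq0⟩ := exY
      have hpert := pert (-((aZ p0 : ℤ) : ℝ)) (-((bZ q0 : ℤ) : ℝ)) 1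
        (fun p hp => by rw [hnx p p0 hp hp0]; ring)
        (fun p hp => by rw [hny p q0 hp hq0]; ring)
      have ha : ∀ p : Fin 3, aZ p = aZ p0 := by
        intro p
        have h := (hpert p).1
        have : ((aZ p : ℤ) : ℝ) = ((aZ p0 : ℤ) : ℝ) := by linarith
        exact_mod_cast this
      have hbb : ∀ p : Fin 3, bZ p = bZ q0 := by
        intro p
        have h := (hpert p).2
        have : ((bZ p : ℤ) : ℝ) = ((bZ q0 : ℤ) : ℝ) := by linarith
        exact_mod_cast this
      apply hm1
      constructor
      · have h0 := ha 0; have h1 := ha 1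
        simp only [haZ] at h0 h1
        simp at h0 h1
        omega
      · have h0 := hbb 0; have h1 := hbb 1
        simp only [hbZ] at h0 h1
        simp at h0 h1
        omega
    -- bounds from the cube
    have hbnd : ∀ p q : Fin 3,
        |s| * |((aZ p : ℤ) : ℝ) - ((aZ q : ℤ) : ℝ)| ≤ 1 ∧
        |s| * |((bZ p : ℤ) : ℝ) - ((bZ q : ℤ) : ℝ)| ≤ 1 := by
      intro p q
      constructor
      · have e : s * (((aZ p : ℤ) : ℝ) - ((aZ q : ℤ) : ℝ)) = (z p).1 - (z q).1 := by
          rw [hx p, hx q]; ring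
        rw [← abs_mul, e]
        have h1 := hcx p; have h2 := hcx q
        exact abs_le.2 ⟨by linarith, by linarith⟩
      · have e : s * (((bZ p : ℤ) : ℝ) - ((bZ q : ℤ) : ℝ)) = (z p).2 - (z q).2 := by
          rw [hy p, hy q]; ring
        rw [← abs_mul, e]
        have h1 := hcy p; have h2 := hcy q
        exact abs_le.2 ⟨by linarith, by linarith⟩
    have habs : ∀ p q : Fin 3,
        |((aZ p : ℤ) : ℝ) - ((aZ q : ℤ) : ℝ)| ≤ (Δ : ℝ) ∧
        |((bZ p : ℤ) : ℝ) - ((bZ q : ℤ) : ℝ)| ≤ (Δ : ℝ) := by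
      intro p q
      have h1a : -(Δ : ℤ) ≤ aZ p - aZ q ∧ aZ p - aZ q ≤ (Δ : ℤ) := by
        rw [haZ]
        exact bound3 hA1l hA1r (by omega) (by omega) (by omega) (by omega) p q
      have h1b : -(Δ : ℤ) ≤ bZ p - bZ q ∧ bZ p - bZ q ≤ (Δ : ℤ) := by
        rw [hbZ]
        exact bound3 hB1l hB1r (by omega) (by omega) (by omega) (by omega) p q
      have h1 : (-(Δ : ℤ) ≤ aZ p - aZ q ∧ aZ p - aZ q ≤ (Δ : ℤ)) ∧
          (-(Δ : ℤ) ≤ bZ p - bZ q ∧ bZ p - bZ q ≤ (Δ : ℤ)) := ⟨h1a, h1b⟩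
      constructor
      · refine abs_le.2 ⟨?_, ?_⟩
        · exact_mod_cast h1.1.1
        · exact_mod_cast h1.1.2
      · refine abs_le.2 ⟨?_, ?_⟩
        · exact_mod_cast h1.2.1
        · exact_mod_cast h1.2.2
    have hA123R : ((A1 : ℤ) : ℝ) + ((A2 : ℤ) : ℝ) + ((A3 : ℤ) : ℝ) = 0 := by exact_mod_cast hA123
    have hB123R : ((B1 : ℤ) : ℝ) + ((B2 : ℤ) : ℝ) + ((B3 : ℤ) : ℝ) = 0 := by exact_mod_cast hB123
    have hspos : 0 < |s| := abs_pos.2 hs0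
    have hsδ : |s| * (Δ : ℝ) = 1 := by
      rcases hctr with ⟨p, q, hCp, hCq, hne⟩ | ⟨p, q, hCp, hCq, hne⟩
      · have e : s * (((aZ p : ℤ) : ℝ) - ((aZ q : ℤ) : ℝ)) = (z p).1 - (z q).1 := by
          rw [hx p, hx q]; ring
        have hneR : ((aZ p : ℤ) : ℝ) - ((aZ q : ℤ) : ℝ) ≠ 0 := by
          intro h
          apply hne
          have : ((aZ p : ℤ) : ℝ) = ((aZ q : ℤ) : ℝ) := by linarith
          exact_mod_cast this
        have hD1 : |s| * |((aZ p : ℤ) : ℝ) - ((aZ q : ℤ) : ℝ)| = 1 := by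
          rw [← abs_mul, e]
          rcases hCp with h | h <;> rcases hCq with h' | h'
          · exfalso; apply hneR
            have : s * (((aZ p : ℤ) : ℝ) - ((aZ q : ℤ) : ℝ)) = 0 := by rw [e, h, h']; ring
            rcases mul_eq_zero.1 this with hh | hh
            · exact absurd hh hs0
            · exact hh
          · rw [h, h']; norm_num
          · rw [h, h']; norm_num
          · exfalso; apply hneR
            have : s * (((aZ p : ℤ) : ℝ) - ((aZ q : ℤ) : ℝ)) = 0 := by rw [e, h, h']; ring
            rcases mul_eq_zero.1 this with hh | hh
            · exact absurd hh hs0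
            · exact hh
        have hall : ∀ p' q' : Fin 3,
            |((aZ p' : ℤ) : ℝ) - ((aZ q' : ℤ) : ℝ)| ≤ |((aZ p : ℤ) : ℝ) - ((aZ q : ℤ) : ℝ)| ∧
            |((bZ p' : ℤ) : ℝ) - ((bZ q' : ℤ) : ℝ)| ≤ |((aZ p : ℤ) : ℝ) - ((aZ q : ℤ) : ℝ)| := by
          intro p' q'
          constructor
          · apply le_of_mul_le_mul_left _ hspos
            calc |s| * |((aZ p' : ℤ) : ℝ) - ((aZ q' : ℤ) : ℝ)| ≤ 1 := (hbnd p' q').1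
              _ = |s| * |((aZ p : ℤ) : ℝ) - ((aZ q : ℤ) : ℝ)| := hD1.symm
          · apply le_of_mul_le_mul_left _ hspos
            calc |s| * |((bZ p' : ℤ) : ℝ) - ((bZ q' : ℤ) : ℝ)| ≤ 1 := (hbnd p' q').2
              _ = |s| * |((aZ p : ℤ) : ℝ) - ((aZ q : ℤ) : ℝ)| := hD1.symm
        have hδle : (Δ : ℝ) ≤ |((aZ p : ℤ) : ℝ) - ((aZ q : ℤ) : ℝ)| := by
          have k1 := (hall 1 0).1
          have k2 := (hall 1 0).2
          have k3 := (hall 2 0).1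
          have k4 := (hall 2 0).2
          have k5 := (hall 2 1).1
          have k6 := (hall 2 1).2
          simp only [haZ, hbZ] at k1 k2 k3 k4 k5 k6
          simp at k1 k2 k3 k4 k5 k6
          rw [hΔR]
          have e5 : |((A3 : ℤ) : ℝ)| = |(-(A2 : ℝ)) - ((A1 : ℤ) : ℝ)| := by
            rw [show (-(A2 : ℝ)) - ((A1 : ℤ) : ℝ) = ((A3 : ℤ) : ℝ) by linarith]
          have e6 : |((B3 : ℤ) : ℝ)| = |(-(B2 : ℝ)) - ((B1 : ℤ) : ℝ)| := by
            rw [show (-(B2 : ℝ)) - ((B1 : ℤ) : ℝ) = ((B3 : ℤ) : ℝ) by linarith]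
          refine max_le (max_le (max_le ?_ ?_) (max_le ?_ ?_)) (max_le ?_ ?_)
          · simpa using k1
          · simpa using k2
          · simpa [abs_neg] using k3
          · simpa [abs_neg] using k4
          · rw [e5]; simpa using k5
          · rw [e6]; simpa using k6
        have hDle : |((aZ p : ℤ) : ℝ) - ((aZ q : ℤ) : ℝ)| ≤ (Δ : ℝ) := (habs p q).1
        have : |((aZ p : ℤ) : ℝ) - ((aZ q : ℤ) : ℝ)| = (Δ : ℝ) := le_antisymm hDle hδle
        rw [← this]; exact hD1
      · have e : s * (((bZ p : ℤ) : ℝ) - ((bZ q : ℤ) : ℝ)) = (z p).2 - (z q).2 := by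
          rw [hy p, hy q]; ring
        have hneR : ((bZ p : ℤ) : ℝ) - ((bZ q : ℤ) : ℝ) ≠ 0 := by
          intro h
          apply hne
          have : ((bZ p : ℤ) : ℝ) = ((bZ q : ℤ) : ℝ) := by linarith
          exact_mod_cast this
        have hD1 : |s| * |((bZ p : ℤ) : ℝ) - ((bZ q : ℤ) : ℝ)| = 1 := by
          rw [← abs_mul, e]
          rcases hCp with h | h <;> rcases hCq with h' | h'
          · exfalso; apply hneR
            have : s * (((bZ p : ℤ) : ℝ) - ((bZ q : ℤ) : ℝ)) = 0 := by rw [e, h, h']; ring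
            rcases mul_eq_zero.1 this with hh | hh
            · exact absurd hh hs0
            · exact hh
          · rw [h, h']; norm_num
          · rw [h, h']; norm_num
          · exfalso; apply hneR
            have : s * (((bZ p : ℤ) : ℝ) - ((bZ q : ℤ) : ℝ)) = 0 := by rw [e, h, h']; ring
            rcases mul_eq_zero.1 this with hh | hh
            · exact absurd hh hs0
            · exact hh
        have hall : ∀ p' q' : Fin 3,
            |((aZ p' : ℤ) : ℝ) - ((aZ q' : ℤ) : ℝ)| ≤ |((bZ p : ℤ) : ℝ) - ((bZ q : ℤ) : ℝ)| ∧
            |((bZ p' : ℤ) : ℝ) - ((bZ q' : ℤ) : ℝ)| ≤ |((bZ p : ℤ) : ℝ) - ((bZ q : ℤ) : ℝ)| := by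
          intro p' q'
          constructor
          · apply le_of_mul_le_mul_left _ hspos
            calc |s| * |((aZ p' : ℤ) : ℝ) - ((aZ q' : ℤ) : ℝ)| ≤ 1 := (hbnd p' q').1
              _ = |s| * |((bZ p : ℤ) : ℝ) - ((bZ q : ℤ) : ℝ)| := hD1.symm
          · apply le_of_mul_le_mul_left _ hspos
            calc |s| * |((bZ p' : ℤ) : ℝ) - ((bZ q' : ℤ) : ℝ)| ≤ 1 := (hbnd p' q').2
              _ = |s| * |((bZ p : ℤ) : ℝ) - ((bZ q : ℤ) : ℝ)| := hD1.symm
        have hδle : (Δ : ℝ) ≤ |((bZ p : ℤ) : ℝ) - ((bZ q : ℤ) : ℝ)| := by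
          have k1 := (hall 1 0).1
          have k2 := (hall 1 0).2
          have k3 := (hall 2 0).1
          have k4 := (hall 2 0).2
          have k5 := (hall 2 1).1
          have k6 := (hall 2 1).2
          simp only [haZ, hbZ] at k1 k2 k3 k4 k5 k6
          simp at k1 k2 k3 k4 k5 k6
          rw [hΔR]
          have e5 : |((A3 : ℤ) : ℝ)| = |(-(A2 : ℝ)) - ((A1 : ℤ) : ℝ)| := by
            rw [show (-(A2 : ℝ)) - ((A1 : ℤ) : ℝ) = ((A3 : ℤ) : ℝ) by linarith]
          have e6 : |((B3 : ℤ) : ℝ)| = |(-(B2 : ℝ)) - ((B1 : ℤ) : ℝ)| := by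
            rw [show (-(B2 : ℝ)) - ((B1 : ℤ) : ℝ) = ((B3 : ℤ) : ℝ) by linarith]
          refine max_le (max_le (max_le ?_ ?_) (max_le ?_ ?_)) (max_le ?_ ?_)
          · simpa using k1
          · simpa using k2
          · simpa [abs_neg] using k3
          · simpa [abs_neg] using k4
          · rw [e5]; simpa using k5
          · rw [e6]; simpa using k6
        have hDle : |((bZ p : ℤ) : ℝ) - ((bZ q : ℤ) : ℝ)| ≤ (Δ : ℝ) := (habs p q).2
        have : |((bZ p : ℤ) : ℝ) - ((bZ q : ℤ) : ℝ)| = (Δ : ℝ) := le_antisymm hDle hδle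
        rw [← this]; exact hD1
    -- s·Δ = ±1
    obtain ⟨σ, hσ11, hσR⟩ : ∃ σ : ℤ, σ * σ = 1 ∧ s * (Δ : ℝ) = (σ : ℝ) := by
      have h1 : |s * (Δ : ℝ)| = 1 := by
        rw [abs_mul, abs_of_nonneg (le_of_lt hδpos)]; exact hsδ
      rcases (abs_eq (by norm_num : (0:ℝ) ≤ 1)).1 h1 with h | h
      · exact ⟨1, by norm_num, by rw [h]; norm_num⟩
      · exact ⟨-1, by norm_num, by rw [h]; norm_num⟩
    obtain ⟨px, hpx⟩ := exX
    obtain ⟨py, hpy⟩ := exY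
    obtain ⟨ex, hexR⟩ : ∃ e : ℤ, (z px).1 = (e : ℝ) := by
      rcases hpx with h | h
      · exact ⟨0, by rw [h]; norm_num⟩
      · exact ⟨1, by rw [h]; norm_num⟩
    obtain ⟨ey, heyR⟩ : ∃ e : ℤ, (z py).2 = (e : ℝ) := by
      rcases hpy with h | h
      · exact ⟨0, by rw [h]; norm_num⟩
      · exact ⟨1, by rw [h]; norm_num⟩
    have hΔint : IsIntegralizer Δ z := by
      refine ⟨hΔpos, fun p => ⟨⟨(Δ : ℤ) * ex + σ * (aZ p - aZ px), ?_⟩,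
        ⟨(Δ : ℤ) * ey + σ * (bZ p - bZ py), ?_⟩⟩⟩
      · have e : (z p).1 = (z px).1 + s * (((aZ p : ℤ) : ℝ) - ((aZ px : ℤ) : ℝ)) := by
          rw [hx p, hx px]; ring
        rw [e, hexR]
        push_cast
        linear_combination (((aZ p : ℤ) : ℝ) - ((aZ px : ℤ) : ℝ)) * hσR
      · have e : (z p).2 = (z py).2 + s * (((bZ p : ℤ) : ℝ) - ((bZ py : ℤ) : ℝ)) := by
          rw [hy p, hy py]; ring
        rw [e, heyR]
        push_cast
        linear_combination (((bZ p : ℤ) : ℝ) - ((bZ py : ℤ) : ℝ)) * hσR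
    have hmin : ∀ N : ℕ, IsIntegralizer N z → Δ ≤ N := by
      intro N hN
      obtain ⟨hNpos, hNint⟩ := hN
      have key : ∀ p q : Fin 3, ((Δ : ℤ) ∣ (N : ℤ) * (aZ p - aZ q)) ∧
          ((Δ : ℤ) ∣ (N : ℤ) * (bZ p - bZ q)) := by
        intro p q
        obtain ⟨ap, hap⟩ := (hNint p).1
        obtain ⟨aq, haq⟩ := (hNint q).1
        obtain ⟨bp, hbp⟩ := (hNint p).2
        obtain ⟨bq, hbq⟩ := (hNint q).2
        constructor
        · refine ⟨σ * (ap - aq), ?_⟩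
          have e : (z p).1 - (z q).1 = s * (((aZ p : ℤ) : ℝ) - ((aZ q : ℤ) : ℝ)) := by
            rw [hx p, hx q]; ring
          have e2 : (N : ℝ) * ((z p).1 - (z q).1) = (ap : ℝ) - (aq : ℝ) := by
            rw [mul_sub, hap, haq]
          have e3 : (N : ℝ) * (σ : ℝ) * (((aZ p : ℤ) : ℝ) - ((aZ q : ℤ) : ℝ))
              = (Δ : ℝ) * ((ap : ℝ) - (aq : ℝ)) := by
            linear_combination (-(N : ℝ) * (((aZ p : ℤ) : ℝ) - ((aZ q : ℤ) : ℝ))) * hσR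
              + (Δ : ℝ) * e2 - (Δ : ℝ) * (N : ℝ) * e
          have e4 : (N : ℤ) * σ * (aZ p - aZ q) = (Δ : ℤ) * (ap - aq) := by exact_mod_cast e3
          linear_combination σ * e4 + (-((N : ℤ) * (aZ p - aZ q))) * hσ11
        · refine ⟨σ * (bp - bq), ?_⟩
          have e : (z p).2 - (z q).2 = s * (((bZ p : ℤ) : ℝ) - ((bZ q : ℤ) : ℝ)) := by
            rw [hy p, hy q]; ring
          have e2 : (N : ℝ) * ((z p).2 - (z q).2) = (bp : ℝ) - (bq : ℝ) := by
            rw [mul_sub, hbp, hbq]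
          have e3 : (N : ℝ) * (σ : ℝ) * (((bZ p : ℤ) : ℝ) - ((bZ q : ℤ) : ℝ))
              = (Δ : ℝ) * ((bp : ℝ) - (bq : ℝ)) := by
            linear_combination (-(N : ℝ) * (((bZ p : ℤ) : ℝ) - ((bZ q : ℤ) : ℝ))) * hσR
              + (Δ : ℝ) * e2 - (Δ : ℝ) * (N : ℝ) * e
          have e4 : (N : ℤ) * σ * (bZ p - bZ q) = (Δ : ℤ) * (bp - bq) := by exact_mod_cast e3
          linear_combination σ * e4 + (-((N : ℤ) * (bZ p - bZ q))) * hσ11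
      have dvdA1 : (Δ : ℤ) ∣ (N : ℤ) * A1 := by
        have h := (key 1 0).1
        have e : aZ 1 - aZ 0 = A1 := by simp [haZ]
        rwa [e] at h
      have dvdB1 : (Δ : ℤ) ∣ (N : ℤ) * B1 := by
        have h := (key 1 0).2
        have e : bZ 1 - bZ 0 = B1 := by simp [hbZ]
        rwa [e] at h
      have dvdA2 : (Δ : ℤ) ∣ (N : ℤ) * A2 := by
        have h := (key 0 2).1
        have e : aZ 0 - aZ 2 = A2 := by simp [haZ]
        rwa [e] at h
      have dvdB2 : (Δ : ℤ) ∣ (N : ℤ) * B2 := by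
        have h := (key 0 2).2
        have e : bZ 0 - bZ 2 = B2 := by simp [hbZ]
        rwa [e] at h
      have dvdA3 : (Δ : ℤ) ∣ (N : ℤ) * A3 := by
        have h := (key 2 1).1
        have e : aZ 2 - aZ 1 = A3 := by simp [haZ]; omega
        rwa [e] at h
      have dvdB3 : (Δ : ℤ) ∣ (N : ℤ) * B3 := by
        have h := (key 2 1).2
        have e : bZ 2 - bZ 1 = B3 := by simp [hbZ]; omega
        rwa [e] at h
      have dvdw1 : (Δ : ℤ) ∣ (N : ℤ) * w1 := by
        have eg : Int.gcd ((N : ℤ) * A1) ((N : ℤ) * B1) = ((N : ℤ) * w1).natAbs := by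
          rw [hA1, hB1, show (N : ℤ) * (w1 * m1.1) = ((N : ℤ) * w1) * m1.1 from by ring,
            show (N : ℤ) * (w1 * m1.2) = ((N : ℤ) * w1) * m1.2 from by ring,
            Int.gcd_mul_left, hb1.2, mul_one]
        have h3 := Int.dvd_coe_gcd dvdA1 dvdB1
        rw [eg] at h3
        exact Int.dvd_natAbs.1 h3
      have dvdw2 : (Δ : ℤ) ∣ (N : ℤ) * w2 := by
        have eg : Int.gcd ((N : ℤ) * A2) ((N : ℤ) * B2) = ((N : ℤ) * w2).natAbs := by
          rw [hA2, hB2, show (N : ℤ) * (w2 * m2.1) = ((N : ℤ) * w2) * m2.1 from by ring,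
            show (N : ℤ) * (w2 * m2.2) = ((N : ℤ) * w2) * m2.2 from by ring,
            Int.gcd_mul_left, hb2.2, mul_one]
        have h3 := Int.dvd_coe_gcd dvdA2 dvdB2
        rw [eg] at h3
        exact Int.dvd_natAbs.1 h3
      have dvdw3 : (Δ : ℤ) ∣ (N : ℤ) * w3 := by
        have eg : Int.gcd ((N : ℤ) * A3) ((N : ℤ) * B3) = ((N : ℤ) * w3).natAbs := by
          rw [hA3, hB3, show (N : ℤ) * (w3 * m3.1) = ((N : ℤ) * w3) * m3.1 from by ring,
            show (N : ℤ) * (w3 * m3.2) = ((N : ℤ) * w3) * m3.2 from by ring,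
            Int.gcd_mul_left, hb3.2, mul_one]
        have h3 := Int.dvd_coe_gcd dvdA3 dvdB3
        rw [eg] at h3
        exact Int.dvd_natAbs.1 h3
      have dvd23 : (Δ : ℤ) ∣ (N : ℤ) * (Int.gcd w2 w3 : ℤ) := by
        have h3 := Int.dvd_coe_gcd dvdw2 dvdw3
        rw [Int.gcd_mul_left] at h3
        push_cast [Int.natAbs_natCast] at h3
        exact h3
      have dvdN : (Δ : ℤ) ∣ (N : ℤ) := by
        have h3 := Int.dvd_coe_gcd dvdw1 dvd23
        rw [Int.gcd_mul_left, hgcd, mul_one] at h3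
        push_cast [Int.natAbs_natCast] at h3
        exact h3
      exact_mod_cast Int.le_of_dvd (by exact_mod_cast hNpos) dvdN
    show sInf {N | IsIntegralizer N z} = Δ
    refine le_antisymm (Nat.sInf_le hΔint) (le_csInf ⟨Δ, hΔint⟩ fun b hb => hmin b hb)
  · -- Part (ii): existence of a triangular vertex
    obtain ⟨p₀, hp₀⟩ := min3 aZ
    obtain ⟨q₀, hq₀⟩ := min3 bZ
    have hpairs : ∀ p q : Fin 3, (-(Δ:ℤ) ≤ aZ p - aZ q ∧ aZ p - aZ q ≤ (Δ:ℤ)) ∧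
        (-(Δ:ℤ) ≤ bZ p - bZ q ∧ bZ p - bZ q ≤ (Δ:ℤ)) := by
      intro p q
      constructor
      · rw [haZ]; exact bound3 hA1l hA1r (by omega) (by omega) (by omega) (by omega) p q
      · rw [hbZ]; exact bound3 hB1l hB1r (by omega) (by omega) (by omega) (by omega) p q
    have ea10 : aZ 1 - aZ 0 = A1 := by simp [haZ]
    have ea02 : aZ 0 - aZ 2 = A2 := by simp [haZ]
    have ea21 : aZ 2 - aZ 1 = A3 := by simp [haZ]; omega
    have eb10 : bZ 1 - bZ 0 = B1 := by simp [hbZ]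
    have eb02 : bZ 0 - bZ 2 = B2 := by simp [hbZ]
    have eb21 : bZ 2 - bZ 1 = B3 := by simp [hbZ]; omega
    have hach : (∃ i j : Fin 3, aZ i - aZ j = (Δ:ℤ)) ∨ (∃ i j : Fin 3, bZ i - bZ j = (Δ:ℤ)) := by
      rcases hcases with h | h | h | h | h | h
      · rcases le_or_gt 0 A1 with hsg | hsg
        · exact Or.inl ⟨1, 0, by omega⟩
        · exact Or.inl ⟨0, 1, by omega⟩
      · rcases le_or_gt 0 B1 with hsg | hsg
        · exact Or.inr ⟨1, 0, by omega⟩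
        · exact Or.inr ⟨0, 1, by omega⟩
      · rcases le_or_gt 0 A2 with hsg | hsg
        · exact Or.inl ⟨0, 2, by omega⟩
        · exact Or.inl ⟨2, 0, by omega⟩
      · rcases le_or_gt 0 B2 with hsg | hsg
        · exact Or.inr ⟨0, 2, by omega⟩
        · exact Or.inr ⟨2, 0, by omega⟩
      · rcases le_or_gt 0 A3 with hsg | hsg
        · exact Or.inl ⟨2, 1, by omega⟩
        · exact Or.inl ⟨1, 2, by omega⟩
      · rcases le_or_gt 0 B3 with hsg | hsg
        · exact Or.inr ⟨2, 1, by omega⟩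
        · exact Or.inr ⟨1, 2, by omega⟩
    set z : Fin 3 → ℝ × ℝ := fun p =>
      (((aZ p - aZ p₀ : ℤ) : ℝ) / (Δ:ℝ), ((bZ p - bZ q₀ : ℤ) : ℝ) / (Δ:ℝ)) with hzdef
    have hzx : ∀ p : Fin 3, (z p).1 = ((aZ p - aZ p₀ : ℤ) : ℝ) / (Δ:ℝ) := fun p => rfl
    have hzy : ∀ p : Fin 3, (z p).2 = ((bZ p - bZ q₀ : ℤ) : ℝ) / (Δ:ℝ) := fun p => rfl
    have hdx : ∀ p q : Fin 3,
        (z p).1 - (z q).1 = (((aZ p : ℤ) : ℝ) - ((aZ q : ℤ) : ℝ)) / (Δ:ℝ) := by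
      intro p q
      rw [hzx p, hzx q]
      push_cast
      ring
    have hdy : ∀ p q : Fin 3,
        (z p).2 - (z q).2 = (((bZ p : ℤ) : ℝ) - ((bZ q : ℤ) : ℝ)) / (Δ:ℝ) := by
      intro p q
      rw [hzy p, hzy q]
      push_cast
      ring
    have hnepq : ∀ p q : Fin 3, (aZ p ≠ aZ q ∨ bZ p ≠ bZ q) → z p ≠ z q := by
      intro p q hor heq
      have e1 : (z p).1 - (z q).1 = 0 := by rw [heq]; ring
      have e2 : (z p).2 - (z q).2 = 0 := by rw [heq]; ring
      rw [hdx p q] at e1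
      rw [hdy p q] at e2
      rw [div_eq_zero_iff] at e1 e2
      rcases hor with h | h
      · rcases e1 with e1 | e1
        · apply h
          have : ((aZ p : ℤ) : ℝ) = ((aZ q : ℤ) : ℝ) := by linarith
          exact_mod_cast this
        · exact hδne e1
      · rcases e2 with e2 | e2
        · apply h
          have : ((bZ p : ℤ) : ℝ) = ((bZ q : ℤ) : ℝ) := by linarith
          exact_mod_cast this
        · exact hδne e2
    have hne01 : z 0 ≠ z 1 := by
      apply hnepq
      by_cases hA : A1 = 0
      · have hB : B1 ≠ 0 := fun h => hm1 ⟨hA, h⟩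
        right; omega
      · left; omega
    have hne02 : z 0 ≠ z 2 := by
      apply hnepq
      by_cases hA : A2 = 0
      · have hB : B2 ≠ 0 := fun h => hm2 ⟨hA, h⟩
        right; omega
      · left; omega
    have hne12 : z 1 ≠ z 2 := by
      apply hnepq
      by_cases hA : A3 = 0
      · have hB : B3 ≠ 0 := fun h => hm3 ⟨hA, h⟩
        right; omega
      · left; omega
    have ea10R : ((aZ 1 : ℤ) : ℝ) - ((aZ 0 : ℤ) : ℝ) = ((A1 : ℤ) : ℝ) := by
      exact_mod_cast congrArg (fun t : ℤ => (t : ℝ)) ea10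
    have ea20R : ((aZ 2 : ℤ) : ℝ) - ((aZ 0 : ℤ) : ℝ) = -((A2 : ℤ) : ℝ) := by
      have : aZ 2 - aZ 0 = -A2 := by omega
      exact_mod_cast congrArg (fun t : ℤ => (t : ℝ)) this
    have ea21R : ((aZ 2 : ℤ) : ℝ) - ((aZ 1 : ℤ) : ℝ) = ((A3 : ℤ) : ℝ) := by
      exact_mod_cast congrArg (fun t : ℤ => (t : ℝ)) ea21
    have eb10R : ((bZ 1 : ℤ) : ℝ) - ((bZ 0 : ℤ) : ℝ) = ((B1 : ℤ) : ℝ) := by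
      exact_mod_cast congrArg (fun t : ℤ => (t : ℝ)) eb10
    have eb20R : ((bZ 2 : ℤ) : ℝ) - ((bZ 0 : ℤ) : ℝ) = -((B2 : ℤ) : ℝ) := by
      have : bZ 2 - bZ 0 = -B2 := by omega
      exact_mod_cast congrArg (fun t : ℤ => (t : ℝ)) this
    have eb21R : ((bZ 2 : ℤ) : ℝ) - ((bZ 1 : ℤ) : ℝ) = ((B3 : ℤ) : ℝ) := by
      exact_mod_cast congrArg (fun t : ℤ => (t : ℝ)) eb21
    have ht1 : ∃ t : ℝ, z 1 - z 0 = t • ((m1.1 : ℝ), (m1.2 : ℝ)) := by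
      refine ⟨(w1 : ℝ) / (Δ:ℝ), Prod.ext ?_ ?_⟩
      · show (z 1).1 - (z 0).1 = (w1 : ℝ) / (Δ:ℝ) * m1.1
        rw [hdx 1 0, ea10R, hA1]
        push_cast
        ring
      · show (z 1).2 - (z 0).2 = (w1 : ℝ) / (Δ:ℝ) * m1.2
        rw [hdy 1 0, eb10R, hB1]
        push_cast
        ring
    have ht2 : ∃ t : ℝ, z 2 - z 0 = t • ((m2.1 : ℝ), (m2.2 : ℝ)) := by
      refine ⟨-((w2 : ℝ) / (Δ:ℝ)), Prod.ext ?_ ?_⟩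
      · show (z 2).1 - (z 0).1 = -((w2 : ℝ) / (Δ:ℝ)) * m2.1
        rw [hdx 2 0, ea20R, hA2]
        push_cast
        ring
      · show (z 2).2 - (z 0).2 = -((w2 : ℝ) / (Δ:ℝ)) * m2.2
        rw [hdy 2 0, eb20R, hB2]
        push_cast
        ring
    have ht3 : ∃ t : ℝ, z 2 - z 1 = t • ((m3.1 : ℝ), (m3.2 : ℝ)) := by
      refine ⟨(w3 : ℝ) / (Δ:ℝ), Prod.ext ?_ ?_⟩
      · show (z 2).1 - (z 1).1 = (w3 : ℝ) / (Δ:ℝ) * m3.1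
        rw [hdx 2 1, ea21R, hA3]
        push_cast
        ring
      · show (z 2).2 - (z 1).2 = (w3 : ℝ) / (Δ:ℝ) * m3.2
        rw [hdy 2 1, eb21R, hB3]
        push_cast
        ring
    have hcube : z ∈ cube 3 := by
      intro p
      constructor
      · rw [Set.mem_Icc, hzx p]
        constructor
        · apply div_nonneg _ (le_of_lt hδpos)
          have h1 : (0:ℤ) ≤ aZ p - aZ p₀ := by have := hp₀ p; omega
          exact_mod_cast h1
        · rw [div_le_one hδpos]
          have h1 := ((hpairs p p₀).1).2
          exact_mod_cast h1
      · rw [Set.mem_Icc, hzy p]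
        constructor
        · apply div_nonneg _ (le_of_lt hδpos)
          have h1 : (0:ℤ) ≤ bZ p - bZ q₀ := by have := hq₀ p; omega
          exact_mod_cast h1
        · rw [div_le_one hδpos]
          have h1 := ((hpairs p q₀).2).2
          exact_mod_cast h1
    have hzm1 : ((z 1).1 - (z 0).1) * (m1.2 : ℝ) - ((z 1).2 - (z 0).2) * (m1.1 : ℝ) = 0 := by
      rw [hdx 1 0, hdy 1 0, ea10R, eb10R, hA1, hB1]
      push_cast
      field_simp
      ring
    have hzm2 : ((z 2).1 - (z 0).1) * (m2.2 : ℝ) - ((z 2).2 - (z 0).2) * (m2.1 : ℝ) = 0 := by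
      rw [hdx 2 0, hdy 2 0, ea20R, eb20R, hA2, hB2]
      push_cast
      field_simp
      ring
    have hzm3 : ((z 2).1 - (z 1).1) * (m3.2 : ℝ) - ((z 2).2 - (z 1).2) * (m3.1 : ℝ) = 0 := by
      rw [hdx 2 1, hdy 2 1, ea21R, eb21R, hA3, hB3]
      push_cast
      field_simp
      ring
    have hz0 : (z p₀).1 = 0 := by rw [hzx p₀]; simp
    have hq0 : (z q₀).2 = 0 := by rw [hzy q₀]; simp
    refine ⟨z, ⟨hcube, ?_⟩, hne01, hne02, hne12, ht1, ht2, ht3⟩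
    refine Set.eq_singleton_iff_unique_mem.2 ⟨Set.mem_sInter.2 fun H hH => hH.2, ?_⟩
    intro z' hz'
    have hget : ∀ H : Set (Fin 3 → ℝ × ℝ),
        H ∈ moveHyps {m1, m2, m3} 3 ∪ facetHyps 3 → z ∈ H → z' ∈ H :=
      fun H h1 h2 => Set.mem_sInter.1 hz' H ⟨h1, h2⟩
    have hM1eq : ((z' 1).1 - (z' 0).1) * (m1.2 : ℝ) - ((z' 1).2 - (z' 0).2) * (m1.1 : ℝ) = 0 :=
      hget _ (Set.mem_union_left _ ⟨m1, hmem1, 0, 1, by decide, rfl⟩) hzm1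
    have hM2eq : ((z' 2).1 - (z' 0).1) * (m2.2 : ℝ) - ((z' 2).2 - (z' 0).2) * (m2.1 : ℝ) = 0 :=
      hget _ (Set.mem_union_left _ ⟨m2, hmem2, 0, 2, by decide, rfl⟩) hzm2
    have hM3eq : ((z' 2).1 - (z' 1).1) * (m3.2 : ℝ) - ((z' 2).2 - (z' 1).2) * (m3.1 : ℝ) = 0 :=
      hget _ (Set.mem_union_left _ ⟨m3, hmem3, 1, 2, by decide, rfl⟩) hzm3
    have hmR1 : ¬((m1.1 : ℝ) = 0 ∧ (m1.2 : ℝ) = 0) := by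
      rintro ⟨u1, u2⟩
      exact hb1.1 (Prod.ext (by exact_mod_cast u1) (by exact_mod_cast u2))
    have hmR2 : ¬((m2.1 : ℝ) = 0 ∧ (m2.2 : ℝ) = 0) := by
      rintro ⟨u1, u2⟩
      exact hb2.1 (Prod.ext (by exact_mod_cast u1) (by exact_mod_cast u2))
    have hmR3 : ¬((m3.1 : ℝ) = 0 ∧ (m3.2 : ℝ) = 0) := by
      rintro ⟨u1, u2⟩
      exact hb3.1 (Prod.ext (by exact_mod_cast u1) (by exact_mod_cast u2))
    have ht1' : ∃ t : ℝ, z' 1 - z' 0 = t • ((m1.1 : ℝ), (m1.2 : ℝ)) := by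
      obtain ⟨t, u1, u2⟩ := perp_smul hmR1 hM1eq
      exact ⟨t, Prod.ext u1 u2⟩
    have ht2' : ∃ t : ℝ, z' 2 - z' 0 = t • ((m2.1 : ℝ), (m2.2 : ℝ)) := by
      obtain ⟨t, u1, u2⟩ := perp_smul hmR2 hM2eq
      exact ⟨t, Prod.ext u1 u2⟩
    have ht3' : ∃ t : ℝ, z' 2 - z' 1 = t • ((m3.1 : ℝ), (m3.2 : ℝ)) := by
      obtain ⟨t, u1, u2⟩ := perp_smul hmR3 hM3eq
      exact ⟨t, Prod.ext u1 u2⟩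
    obtain ⟨s', hs'⟩ := tri_param z' ht1' ht2' ht3'
    have hf1 : (z' p₀).1 = 0 :=
      hget {w | (w p₀).1 = 0} (Set.mem_union_right _ ⟨p₀, Or.inl rfl⟩) hz0
    have hf2 : (z' q₀).2 = 0 :=
      hget {w | (w q₀).2 = 0} (Set.mem_union_right _ ⟨q₀, Or.inr (Or.inr (Or.inl rfl))⟩) hq0
    have hs'Δ : s' * (Δ:ℝ) = 1 := by
      rcases hach with ⟨i, j, hij⟩ | ⟨i, j, hij⟩
      · have hi : aZ i - aZ p₀ = (Δ:ℤ) := by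
          have h1 := ((hpairs i p₀).1).2
          have h2 := hp₀ j
          omega
        have hiR : ((aZ i : ℤ) : ℝ) - ((aZ p₀ : ℤ) : ℝ) = (Δ:ℝ) := by exact_mod_cast hi
        have hzi : (z i).1 = 1 := by
          rw [hzx i, hi]
          push_cast
          exact div_self hδne
        have hf3 : (z' i).1 = 1 :=
          hget {w | (w i).1 = 1} (Set.mem_union_right _ ⟨i, Or.inr (Or.inl rfl)⟩) hzi
        have e3 : (z' i).1 - (z' p₀).1 = s' * (((aZ i : ℤ) : ℝ) - ((aZ p₀ : ℤ) : ℝ)) := by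
          rw [(hs' i).1, (hs' p₀).1]; ring
        rw [hf3, hf1, hiR] at e3
        linarith
      · have hi : bZ i - bZ q₀ = (Δ:ℤ) := by
          have h1 := ((hpairs i q₀).2).2
          have h2 := hq₀ j
          omega
        have hiR : ((bZ i : ℤ) : ℝ) - ((bZ q₀ : ℤ) : ℝ) = (Δ:ℝ) := by exact_mod_cast hi
        have hzi : (z i).2 = 1 := by
          rw [hzy i, hi]
          push_cast
          exact div_self hδne
        have hf3 : (z' i).2 = 1 :=
          hget {w | (w i).2 = 1} (Set.mem_union_right _ ⟨i, Or.inr (Or.inr (Or.inr rfl))⟩) hzi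
        have e3 : (z' i).2 - (z' q₀).2 = s' * (((bZ i : ℤ) : ℝ) - ((bZ q₀ : ℤ) : ℝ)) := by
          rw [(hs' i).2, (hs' q₀).2]; ring
        rw [hf3, hf2, hiR] at e3
        linarith
    funext p
    have ex' : (z' p).1 = s' * (((aZ p : ℤ) : ℝ) - ((aZ p₀ : ℤ) : ℝ)) := by
      have u1 := (hs' p).1
      have u2 := (hs' p₀).1
      rw [hf1] at u2
      rw [u1]
      linear_combination -u2
    have ey' : (z' p).2 = s' * (((bZ p : ℤ) : ℝ) - ((bZ q₀ : ℤ) : ℝ)) := by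
      have u1 := (hs' p).2
      have u2 := (hs' q₀).2
      rw [hf2] at u2
      rw [u1]
      linear_combination -u2
    have hs'' : s' = 1 / (Δ:ℝ) := by
      field_simp
      linarith [hs'Δ]
    have gx : (z p).1 = s' * (((aZ p : ℤ) : ℝ) - ((aZ p₀ : ℤ) : ℝ)) := by
      rw [hzx p, hs'']
      push_cast
      ring
    have gy : (z p).2 = s' * (((bZ p : ℤ) : ℝ) - ((bZ q₀ : ℤ) : ℝ)) := by
      rw [hzy p, hs'']
      push_cast
      ring
    exact Prod.ext (ex'.trans gx.symm) (ey'.trans gy.symm)
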